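/- Let X₁, X₂, … be i.i.d. random variables with the SVG distribution with parameters a, b > 0 and location m = 0. Define Â′_N = (1/N)∑_{i=1}^N |X_i| and V̂′_N = (1/N)∑_{i=1}^N X_i². Then there exists a constant C > 0 (depending on a and b) such that for all N ≥ 1, P((1/2)·ln V̂′_N − ln Â′_N > (1/2)·ln(π/2)) ≥ 1 − C/N. -/

import Mathlib

open MeasureTheory ProbabilityTheory Filter Real
open scoped Topology ENNReal NNReal

section Helpers
open Set


lemma integral_withDensity_ofReal' {p : ℝ → ℝ} (hp : Measurable p) (hp0 : ∀ x, 0 ≤ p x)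
    (g : ℝ → ℝ) :
    ∫ x, g x ∂(volume.withDensity (fun x => ENNReal.ofReal (p x))) = ∫ x, p x * g x := by
  have h : (fun x => ENNReal.ofReal (p x))
      = (fun x => ((Real.toNNReal (p x) : ℝ≥0) : ℝ≥0∞)) := rfl
  rw [h, integral_withDensity_eq_integral_smul hp.real_toNNReal g]
  congr 1
  ext x
  simp [NNReal.smul_def, Real.coe_toNNReal _ (hp0 x)]

lemma integrable_withDensity_ofReal' {p : ℝ → ℝ} (hp : Measurable p) (hp0 : ∀ x, 0 ≤ p x)
    {g : ℝ → ℝ} :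
    Integrable g (volume.withDensity (fun x => ENNReal.ofReal (p x))) ↔
      Integrable (fun x => g x * p x) volume := by
  rw [integrable_withDensity_iff hp.ennreal_ofReal
    (Filter.Eventually.of_forall fun x => ENNReal.ofReal_lt_top)]
  simp_rw [ENNReal.toReal_ofReal (hp0 _)]

lemma integrable_sqrt_pow_gamma {a : ℝ} (ha : 0 < a) {k : ℕ} (hk : k ≠ 0) :
    Integrable (fun x => Real.sqrt x ^ k) (gammaMeasure a 1) := by
  have hpdf : gammaPDF a 1 = fun x => ENNReal.ofReal (gammaPDFReal a 1 x) := rfl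
  rw [gammaMeasure, hpdf,
    integrable_withDensity_ofReal' (measurable_gammaPDFReal a 1) (gammaPDFReal_nonneg ha one_pos)]
  have h0 : (0:ℝ) < a + k / 2 := by positivity
  rw [← integrableOn_univ, ← Set.Iic_union_Ioi (a := (0:ℝ)), integrableOn_union]
  constructor
  · have : EqOn (fun x => Real.sqrt x ^ k * gammaPDFReal a 1 x) (fun _ => (0:ℝ)) (Iic 0) := by
      intro x hx
      have hs : Real.sqrt x = 0 := Real.sqrt_eq_zero'.mpr hx
      simp [hs, zero_pow hk]
    exact (integrableOn_congr_fun this measurableSet_Iic).mpr ((integrableOn_const_iff (C := (0:ℝ))).mpr (Or.inl (by simp)))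
  · have hbase := ((Real.GammaIntegral_convergent h0).const_mul (1 / Real.Gamma a))
    refine (integrableOn_congr_fun ?_ measurableSet_Ioi).mpr hbase
    intro x hx
    have hx0 : (0:ℝ) < x := hx
    have hsk : Real.sqrt x ^ k = x ^ ((k : ℝ) / 2) := by
      rw [Real.sqrt_eq_rpow, ← Real.rpow_natCast (x ^ ((1:ℝ)/2)) k, ← Real.rpow_mul hx0.le]
      congr 1
      ring
    have hcomb : x ^ (a + (k:ℝ) / 2 - 1) = x ^ ((k:ℝ)/2) * x ^ (a - 1) := by
      rw [← Real.rpow_add hx0]; ring_nf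
    simp only [gammaPDFReal, if_pos hx0.le, Real.one_rpow, one_mul, hsk, hcomb]
    ring

lemma gammaMeasure_Iic_zero {a : ℝ} : gammaMeasure a 1 (Iic 0) = 0 := by
  rw [gammaMeasure, withDensity_apply _ measurableSet_Iic]
  rw [setLIntegral_congr (Filter.EventuallyEq.symm Iio_ae_eq_Iic)]
  exact lintegral_gammaPDF_of_nonpos le_rfl

lemma gammaMeasure_singleton {a c : ℝ} : gammaMeasure a 1 {c} = 0 := by
  rw [gammaMeasure, withDensity_apply _ (measurableSet_singleton c)]
  rw [Measure.restrict_eq_zero.mpr (Real.volume_singleton)]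
  simp

lemma gammaMeasure_Ioi_one {a : ℝ} (ha : 0 < a) : gammaMeasure a 1 (Ioi 0) = 1 := by
  have : IsProbabilityMeasure (gammaMeasure a 1) := isProbabilityMeasure_gammaMeasure ha one_pos
  have h := prob_compl_eq_one_sub (μ := gammaMeasure a 1) measurableSet_Iic (s := Iic 0)
  rw [compl_Iic] at h
  rw [h, gammaMeasure_Iic_zero]
  simp

lemma gamma_sqrt_pos {a : ℝ} (ha : 0 < a) :
    0 < ∫ x, Real.sqrt x ∂(gammaMeasure a 1) := by
  have : IsProbabilityMeasure (gammaMeasure a 1) := isProbabilityMeasure_gammaMeasure ha one_pos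
  rw [integral_pos_iff_support_of_nonneg_ae
    (Filter.Eventually.of_forall fun x => Real.sqrt_nonneg x)
    (by simpa using integrable_sqrt_pow_gamma ha one_ne_zero)]
  have hsub : Ioi (0:ℝ) ⊆ Function.support fun x => Real.sqrt x := by
    intro x hx
    exact (Real.sqrt_pos.mpr hx).ne'
  calc (0:ℝ≥0∞) < 1 := by norm_num
  _ = gammaMeasure a 1 (Ioi 0) := (gammaMeasure_Ioi_one ha).symm
  _ ≤ _ := measure_mono hsub

lemma gamma_sqrt_sq_lt {a : ℝ} (ha : 0 < a) :
    (∫ x, Real.sqrt x ∂(gammaMeasure a 1)) ^ 2 < ∫ x, Real.sqrt x ^ 2 ∂(gammaMeasure a 1) := by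
  have : IsProbabilityMeasure (gammaMeasure a 1) := isProbabilityMeasure_gammaMeasure ha one_pos
  set γ := gammaMeasure a 1
  set c := ∫ x, Real.sqrt x ∂γ with hc
  have hmem : MemLp (fun x => Real.sqrt x) 2 γ :=
    (memLp_two_iff_integrable_sq
      Real.continuous_sqrt.measurable.aestronglyMeasurable).mpr
      (integrable_sqrt_pow_gamma ha two_ne_zero)
  have hvd : variance (fun x => Real.sqrt x) γ
      = (∫ x, Real.sqrt x ^ 2 ∂γ) - c ^ 2 := by
    rw [variance_eq_sub hmem]
    rfl
  have hvpos : 0 < variance (fun x => Real.sqrt x) γ := by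
    rw [variance_eq_integral hmem.aemeasurable]
    simp only [Pi.pow_apply, Pi.sub_apply, ← hc]
    have hint : Integrable (fun x => (Real.sqrt x - c) ^ 2) γ := by
      have := (hmem.sub (memLp_const c)).integrable_sq
      simpa using this
    rw [integral_pos_iff_support_of_nonneg_ae
      (Filter.Eventually.of_forall fun x => sq_nonneg _) (by simpa using hint)]
    have hsub : Ioi (0:ℝ) \ {c ^ 2} ⊆ Function.support fun x => (Real.sqrt x - c) ^ 2 := by
      intro x hx
      have hx0 : 0 < x := hx.1
      have hxc : x ≠ c ^ 2 := hx.2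
      have : Real.sqrt x - c ≠ 0 := by
        intro h
        have hsq : Real.sqrt x = c := by linarith
        apply hxc
        rw [← hsq, Real.sq_sqrt hx0.le]
      exact pow_ne_zero 2 this
    calc (0:ℝ≥0∞) < 1 := by norm_num
    _ = γ (Ioi 0 \ {c ^ 2}) := by
        rw [measure_diff_null gammaMeasure_singleton, gammaMeasure_Ioi_one ha]
    _ ≤ _ := measure_mono hsub
  have := hvd ▸ hvpos
  linarith [this]

lemma gaussianPDFReal_std (x : ℝ) :
    gaussianPDFReal 0 1 x = (Real.sqrt (2 * π))⁻¹ * Real.exp (-(2⁻¹ : ℝ) * x ^ 2) := by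
  unfold gaussianPDFReal
  push_cast
  rw [mul_one, sub_zero]
  ring_nf

lemma integral_abs_rpow_gaussian {q : ℝ} (hq : (-1:ℝ) < q) :
    ∫ x, |x| ^ q ∂(gaussianReal 0 1)
      = (Real.sqrt (2 * π))⁻¹ * ((2:ℝ) ^ ((q + 1) / 2) * Real.Gamma ((q + 1) / 2)) := by
  have hpdf : gaussianPDF 0 1 = fun x => ENNReal.ofReal (gaussianPDFReal 0 1 x) := rfl
  rw [gaussianReal_of_var_ne_zero 0 one_ne_zero, hpdf,
    integral_withDensity_ofReal' (measurable_gaussianPDFReal 0 1) (gaussianPDFReal_nonneg 0 1)]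
  have hpt : ∀ x : ℝ, gaussianPDFReal 0 1 x * |x| ^ q
      = (Real.sqrt (2 * π))⁻¹ * (|x| ^ q * Real.exp (-(2⁻¹:ℝ) * |x| ^ (2:ℝ))) := by
    intro x
    rw [gaussianPDFReal_std]
    have : |x| ^ (2:ℝ) = x ^ 2 := by
      rw [show ((2:ℝ)) = ((2:ℕ):ℝ) by norm_num, Real.rpow_natCast, sq_abs]
    rw [this]
    ring
  simp_rw [hpt]
  rw [integral_const_mul, integral_comp_abs
    (f := fun t => t ^ q * Real.exp (-(2⁻¹:ℝ) * t ^ (2:ℝ))),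
    integral_rpow_mul_exp_neg_mul_rpow (by norm_num : (0:ℝ) < 2) hq (by norm_num : (0:ℝ) < 2⁻¹)]
  have h2 : ((2:ℝ)⁻¹) ^ (-(q + 1) / 2) = (2:ℝ) ^ ((q + 1) / 2) := by
    rw [← Real.rpow_neg_one (2:ℝ), ← Real.rpow_mul (by norm_num : (0:ℝ) ≤ 2)]
    norm_num
    congr 1
    ring
  rw [h2]
  ring

lemma integral_abs_gaussian :
    ∫ x, |x| ∂(gaussianReal 0 1) = 2 / Real.sqrt (2 * π) := by
  have h := integral_abs_rpow_gaussian (q := 1) (by norm_num)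
  simp_rw [Real.rpow_one] at h
  rw [h, show ((1:ℝ) + 1) / 2 = 1 by norm_num, Real.rpow_one, Real.Gamma_one]
  have : Real.sqrt (2 * π) > 0 := Real.sqrt_pos.mpr (by positivity)
  field_simp

lemma integral_sq_gaussian :
    ∫ x, x ^ 2 ∂(gaussianReal 0 1) = 1 := by
  have h := integral_abs_rpow_gaussian (q := 2) (by norm_num)
  have hconv : ∀ x : ℝ, |x| ^ (2:ℝ) = x ^ 2 := by
    intro x
    rw [show ((2:ℝ)) = ((2:ℕ):ℝ) by norm_num, Real.rpow_natCast, sq_abs]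
  simp_rw [hconv] at h
  rw [h]
  have h32 : ((2:ℝ) + 1) / 2 = 1 / 2 + 1 := by norm_num
  rw [h32, Real.Gamma_add_one (by norm_num), Real.Gamma_one_half_eq]
  have h2r : (2:ℝ) ^ ((1:ℝ) / 2 + 1) = Real.sqrt 2 * 2 := by
    rw [Real.rpow_add (by norm_num), Real.rpow_one,
      ← Real.sqrt_eq_rpow]
  rw [h2r, Real.sqrt_mul (by norm_num : (0:ℝ) ≤ 2)]
  have hs2 : Real.sqrt 2 > 0 := by positivity
  have hsp : Real.sqrt π > 0 := Real.sqrt_pos.mpr Real.pi_pos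
  field_simp

lemma integrable_abs_pow_gaussian (k : ℕ) :
    Integrable (fun x => |x| ^ k) (gaussianReal 0 1) := by
  have hpdf : gaussianPDF 0 1 = fun x => ENNReal.ofReal (gaussianPDFReal 0 1 x) := rfl
  rw [gaussianReal_of_var_ne_zero 0 one_ne_zero, hpdf,
    integrable_withDensity_ofReal' (measurable_gaussianPDFReal 0 1) (gaussianPDFReal_nonneg 0 1)]
  have hg : Integrable (fun x : ℝ => (Real.sqrt (2 * π))⁻¹ *
      (x ^ ((k:ℕ):ℝ) * Real.exp (-(2⁻¹:ℝ) * x ^ 2))) volume :=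
    (integrable_rpow_mul_exp_neg_mul_sq (by norm_num : (0:ℝ) < 2⁻¹)
      (lt_of_lt_of_le neg_one_lt_zero (Nat.cast_nonneg k))).const_mul _
  refine hg.mono ?_ ?_
  · exact ((measurable_abs.pow_const k).mul (measurable_gaussianPDFReal 0 1)).aestronglyMeasurable
  · refine Filter.Eventually.of_forall fun x => ?_
    rw [Real.norm_eq_abs, Real.norm_eq_abs, gaussianPDFReal_std, Real.rpow_natCast]
    have h1 : |(|x| ^ k * ((Real.sqrt (2 * π))⁻¹ * Real.exp (-(2⁻¹:ℝ) * x ^ 2)))|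
        = |x| ^ k * ((Real.sqrt (2 * π))⁻¹ * Real.exp (-(2⁻¹:ℝ) * x ^ 2)) := by
      apply abs_of_nonneg
      positivity
    have h2 : |(Real.sqrt (2 * π))⁻¹ * (x ^ k * Real.exp (-(2⁻¹:ℝ) * x ^ 2))|
        = (Real.sqrt (2 * π))⁻¹ * (|x| ^ k * Real.exp (-(2⁻¹:ℝ) * x ^ 2)) := by
      rw [abs_mul, abs_mul, abs_of_nonneg (by positivity : (0:ℝ) ≤ (Real.sqrt (2 * π))⁻¹),
        abs_of_nonneg (Real.exp_pos _).le, ← pow_abs]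
    rw [h1, h2]
    ring_nf
    exact le_rfl

lemma cheb_bound {Ω : Type*} [MeasurableSpace Ω] {P : Measure Ω} [IsProbabilityMeasure P]
    (Z : ℕ → Ω → ℝ) (hmem : ∀ i, MemLp (Z i) 2 P)
    (hind : ∀ i j, i ≠ j → IndepFun (Z i) (Z j) P)
    {m v : ℝ} (hm : ∀ i, ∫ ω, Z i ω ∂P = m) (hv : ∀ i, variance (Z i) P = v)
    {N : ℕ} (hN : 1 ≤ N) {ε : ℝ} (hε : 0 < ε) :
    (P {ω | ε ≤ |(∑ i ∈ Finset.range N, Z i ω) / N - m|}).toReal ≤ v / (N * ε ^ 2) := by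
  have hNpos : (0:ℝ) < N := by exact_mod_cast hN
  have hv0 : 0 ≤ v := (hv 0) ▸ variance_nonneg (Z 0) P
  have hSmem : MemLp (∑ i ∈ Finset.range N, Z i) 2 P :=
    memLp_finset_sum' (Finset.range N) (fun i _ => hmem i)
  have hES : ∫ ω, (∑ i ∈ Finset.range N, Z i) ω ∂P = N * m := by
    simp only [Finset.sum_apply]
    rw [integral_finset_sum _ (fun i _ => (hmem i).integrable one_le_two)]
    simp [hm]
  have hVS : variance (∑ i ∈ Finset.range N, Z i) P = N * v := by
    rw [IndepFun.variance_sum (fun i _ => hmem i)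
      (fun i _ j _ hij => hind i j hij)]
    simp [hv]
  have hch := meas_ge_le_variance_div_sq (μ := P) hSmem
    (c := N * ε) (by positivity)
  rw [hES, hVS] at hch
  have hset : {ω | ε ≤ |(∑ i ∈ Finset.range N, Z i ω) / N - m|}
      = {ω | N * ε ≤ |(∑ i ∈ Finset.range N, Z i) ω - N * m|} := by
    ext ω
    simp only [Set.mem_setOf_eq, Finset.sum_apply]
    have heq : (∑ i ∈ Finset.range N, Z i ω) / N - m
        = ((∑ i ∈ Finset.range N, Z i ω) - N * m) / N := by
      field_simp
    rw [heq, abs_div, abs_of_pos hNpos, le_div_iff₀ hNpos, mul_comm]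
  rw [hset]
  have heq2 : (N:ℝ) * v / (N * ε) ^ 2 = v / (N * ε ^ 2) := by
    field_simp
  calc (P {ω | N * ε ≤ |(∑ i ∈ Finset.range N, Z i) ω - N * m|}).toReal
      ≤ (ENNReal.ofReal ((N:ℝ) * v / (N * ε) ^ 2)).toReal :=
        ENNReal.toReal_mono ENNReal.ofReal_ne_top hch
    _ = v / (N * ε ^ 2) := by
        rw [ENNReal.toReal_ofReal (by positivity), heq2]

lemma svg_key_arith {m1 m2 ε : ℝ} (hm1pos : 0 < m1) (hεpos : 0 < ε)
    (hε1 : ε ≤ m1 / 2) (hε2 : ε ≤ 1)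
    (hε3' : ε * (π * m1 + π / 2 + 2) ≤ m2 - π / 2 * m1 ^ 2) :
    ∀ A V : ℝ, |A - m1| < ε → |V - m2| < ε →
      (1/2) * Real.log (π/2) < (1/2) * Real.log V - Real.log A := by
  intro A V hA hV
  obtain ⟨hA1, hA2⟩ := abs_lt.mp hA
  obtain ⟨hV1, hV2⟩ := abs_lt.mp hV
  have hApos : 0 < A := by linarith
  have hmain : π / 2 * A ^ 2 < V := by
    have e1 : A ^ 2 < (m1 + ε) ^ 2 := by nlinarith
    have e2 : π / 2 * (m1 + ε) ^ 2 + ε ≤ m2 - ε := by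
      have hee : ε ^ 2 ≤ ε := by nlinarith
      nlinarith [Real.pi_pos, hm1pos, hεpos]
    nlinarith [Real.pi_pos]
  have hlog := Real.log_lt_log (by positivity : (0:ℝ) < π / 2 * A ^ 2) hmain
  rw [Real.log_mul (by positivity) (by positivity), Real.log_pow] at hlog
  push_cast at hlog
  linarith

end Helpers

/-- The symmetric variance-gamma (SVG) distribution with shape `a`, scale `b` and
location `m`: the law of `m + √(b·G)·Z` where `G ~ Gamma(a,1)` and `Z ~ N(0,1)`
are independent. -/
noncomputable def svg (a b m : ℝ) : Measure ℝ :=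
  ((gammaMeasure a 1).prod (gaussianReal 0 1)).map
    (fun p : ℝ × ℝ => m + Real.sqrt (b * p.1) * p.2)

/-- Empirical first absolute moment `Â′_N`. -/
noncomputable def empAbsMean {Ω : Type*} (X : ℕ → Ω → ℝ) (N : ℕ) (ω : Ω) : ℝ :=
  (∑ i ∈ Finset.range N, |X i ω|) / N

/-- Empirical second raw moment `V̂′_N`. -/
noncomputable def empSqMean {Ω : Type*} (X : ℕ → Ω → ℝ) (N : ℕ) (ω : Ω) : ℝ :=
  (∑ i ∈ Finset.range N, (X i ω) ^ 2) / N

/-- Feasibility of the modified MME for the SVG distribution with `m = 0`: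
`P(½ln V̂′_N − ln Â′_N > ½ln(π/2)) ≥ 1 − C/N`. -/
theorem svg_modified_mme_feasible
    {Ω : Type*} [MeasurableSpace Ω] (P : Measure Ω) [IsProbabilityMeasure P]
    (a b : ℝ) (ha : 0 < a) (hb : 0 < b)
    (X : ℕ → Ω → ℝ) (hXmeas : ∀ i, Measurable (X i))
    (hindep : iIndepFun X P)
    (hdist : ∀ i, Measure.map (X i) P = svg a b 0) :
    ∃ C : ℝ, 0 < C ∧ ∀ N : ℕ, 1 ≤ N →
      1 - C / N ≤
        (P {ω | (1 / 2) * Real.log (π / 2) <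
            (1 / 2) * Real.log (empSqMean X N ω) - Real.log (empAbsMean X N ω)}).toReal := by
  classical
  haveI : IsProbabilityMeasure (gammaMeasure a 1) := isProbabilityMeasure_gammaMeasure ha one_pos
  have hf0 : Measurable (fun p : ℝ × ℝ => (0:ℝ) + Real.sqrt (b * p.1) * p.2) := by
    apply Measurable.add measurable_const
    exact (Real.continuous_sqrt.measurable.comp (measurable_fst.const_mul b)).mul measurable_snd
  have hsvg : svg a b 0
      = ((gammaMeasure a 1).prod (gaussianReal 0 1)).map
          (fun p : ℝ × ℝ => (0:ℝ) + Real.sqrt (b * p.1) * p.2) := rfl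
  haveI : IsProbabilityMeasure (svg a b 0) := by
    rw [hsvg]; exact Measure.isProbabilityMeasure_map hf0.aemeasurable
  set c := ∫ x, Real.sqrt x ∂(gammaMeasure a 1) with hc
  set g2 := ∫ x, Real.sqrt x ^ 2 ∂(gammaMeasure a 1) with hg2
  have hcpos : 0 < c := gamma_sqrt_pos ha
  have hclt : c ^ 2 < g2 := gamma_sqrt_sq_lt ha
  set m1 := ∫ x, |x| ∂(svg a b 0) with hm1
  set m2 := ∫ x, x ^ 2 ∂(svg a b 0) with hm2
  -- pointwise decompositions
  have habs_pt : ∀ p : ℝ × ℝ, |(0:ℝ) + Real.sqrt (b * p.1) * p.2|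
      = (Real.sqrt b * Real.sqrt p.1) * |p.2| := by
    intro p
    rw [zero_add, abs_mul, abs_of_nonneg (Real.sqrt_nonneg _), Real.sqrt_mul hb.le]
  have hsq_pt : ∀ p : ℝ × ℝ, ((0:ℝ) + Real.sqrt (b * p.1) * p.2) ^ 2
      = (b * Real.sqrt p.1 ^ 2) * p.2 ^ 2 := by
    intro p
    rw [zero_add, Real.sqrt_mul hb.le, mul_pow, mul_pow, Real.sq_sqrt hb.le]
  have hpow4_pt : ∀ p : ℝ × ℝ, ((0:ℝ) + Real.sqrt (b * p.1) * p.2) ^ 4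
      = (b ^ 2 * Real.sqrt p.1 ^ 4) * p.2 ^ 4 := by
    intro p
    rw [zero_add, Real.sqrt_mul hb.le]
    have h4 : Real.sqrt b ^ 4 = b ^ 2 := by
      rw [show (4:ℕ) = 2 * 2 from rfl, pow_mul, Real.sq_sqrt hb.le]
    rw [mul_pow, mul_pow, h4]
  -- gaussian integrability
  have hg_abs : Integrable (fun y : ℝ => |y|) (gaussianReal 0 1) := by
    simpa using integrable_abs_pow_gaussian 1
  have hg_sq : Integrable (fun y : ℝ => y ^ 2) (gaussianReal 0 1) := by
    have := integrable_abs_pow_gaussian 2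
    simpa [sq_abs] using this
  have hg_four : Integrable (fun y : ℝ => y ^ 4) (gaussianReal 0 1) := by
    have h := integrable_abs_pow_gaussian 4
    have h4 : ∀ y : ℝ, |y| ^ 4 = y ^ 4 := fun y => by
      rw [show (4:ℕ) = 2 * 2 from rfl, pow_mul, pow_mul, sq_abs]
    simp_rw [h4] at h
    exact h
  have hγ2 : Integrable (fun x => Real.sqrt x ^ 2) (gammaMeasure a 1) :=
    integrable_sqrt_pow_gamma ha two_ne_zero
  have hγ4 : Integrable (fun x => Real.sqrt x ^ 4) (gammaMeasure a 1) :=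
    integrable_sqrt_pow_gamma ha (by norm_num)
  -- moment values
  have hm1val : m1 = Real.sqrt b * c * (2 / Real.sqrt (2 * π)) := by
    rw [hm1, hsvg, integral_map hf0.aemeasurable measurable_abs.aestronglyMeasurable]
    simp_rw [habs_pt]
    rw [integral_prod_mul (fun x => Real.sqrt b * Real.sqrt x) (fun y => |y|),
      integral_const_mul, integral_abs_gaussian]
  have hm2val : m2 = b * g2 := by
    rw [hm2, hsvg, integral_map hf0.aemeasurable
      (measurable_id'.pow_const 2).aestronglyMeasurable]
    simp_rw [hsq_pt]
    rw [integral_prod_mul (fun x => b * Real.sqrt x ^ 2) (fun y => y ^ 2),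
      integral_const_mul, integral_sq_gaussian, ← hg2]
    ring
  -- Memℒp over svg
  have hMabs : MemLp (fun x : ℝ => |x|) 2 (svg a b 0) := by
    refine (memLp_two_iff_integrable_sq measurable_abs.aestronglyMeasurable).mpr ?_
    rw [hsvg, integrable_map_measure
      ((measurable_abs.pow_const 2).aestronglyMeasurable) hf0.aemeasurable]
    have hco : ((fun x : ℝ => |x| ^ 2) ∘ (fun p : ℝ × ℝ => (0:ℝ) + Real.sqrt (b * p.1) * p.2))
        = fun p : ℝ × ℝ => (b * Real.sqrt p.1 ^ 2) * p.2 ^ 2 := by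
      funext p
      simp only [Function.comp_apply]
      rw [sq_abs, hsq_pt p]
    rw [hco]
    exact (hγ2.const_mul b).mul_prod hg_sq
  have hMsq : MemLp (fun x : ℝ => x ^ 2) 2 (svg a b 0) := by
    refine (memLp_two_iff_integrable_sq
      ((measurable_id'.pow_const 2).aestronglyMeasurable)).mpr ?_
    rw [hsvg, integrable_map_measure
      (((measurable_id'.pow_const 2).pow_const 2).aestronglyMeasurable) hf0.aemeasurable]
    have hco : ((fun x : ℝ => (x ^ 2) ^ 2) ∘ (fun p : ℝ × ℝ => (0:ℝ) + Real.sqrt (b * p.1) * p.2))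
        = fun p : ℝ × ℝ => (b ^ 2 * Real.sqrt p.1 ^ 4) * p.2 ^ 4 := by
      funext p
      simp only [Function.comp_apply]
      rw [← pow_mul, hpow4_pt p]
    rw [hco]
    exact (hγ4.const_mul _).mul_prod hg_four
  -- positivity and the gap
  have hsqrt2pi : 0 < Real.sqrt (2 * π) := Real.sqrt_pos.mpr (by positivity)
  have hm1pos : 0 < m1 := by
    rw [hm1val]
    have := Real.sqrt_pos.mpr hb
    positivity
  have hgap : π / 2 * m1 ^ 2 < m2 := by
    rw [hm1val, hm2val]
    have hsqb : Real.sqrt b ^ 2 = b := Real.sq_sqrt hb.le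
    have h2pi : Real.sqrt (2 * π) ^ 2 = 2 * π := Real.sq_sqrt (by positivity)
    have key : π / 2 * (Real.sqrt b * c * (2 / Real.sqrt (2 * π))) ^ 2 = b * c ^ 2 := by
      rw [mul_pow, mul_pow, div_pow, hsqb, h2pi]
      field_simp
    rw [key]
    nlinarith [hclt, hb]
  -- transfers to Ω
  have hYmem : ∀ i, MemLp (fun ω => |X i ω|) 2 P := by
    intro i
    have h := hMabs
    rw [← hdist i] at h
    exact h.comp_of_map (hXmeas i).aemeasurable
  have hWmem : ∀ i, MemLp (fun ω => (X i ω) ^ 2) 2 P := by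
    intro i
    have h := hMsq
    rw [← hdist i] at h
    exact h.comp_of_map (hXmeas i).aemeasurable
  have hYint : ∀ i, ∫ ω, |X i ω| ∂P = m1 := by
    intro i
    have h := integral_map (μ := P) (φ := X i) (hXmeas i).aemeasurable
      (measurable_abs.aestronglyMeasurable (f := fun x : ℝ => |x|))
    rw [hdist i] at h
    rw [hm1]
    exact h.symm
  have hWint : ∀ i, ∫ ω, (X i ω) ^ 2 ∂P = m2 := by
    intro i
    have h := integral_map (μ := P) (φ := X i) (hXmeas i).aemeasurable
      ((measurable_id'.pow_const 2).aestronglyMeasurable (f := fun x : ℝ => x ^ 2))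
    rw [hdist i] at h
    rw [hm2]
    exact h.symm
  set v1 := variance (fun x : ℝ => |x|) (svg a b 0) with hv1
  set v2 := variance (fun x : ℝ => x ^ 2) (svg a b 0) with hv2
  have hYvar : ∀ i, variance (fun ω => |X i ω|) P = v1 := by
    intro i
    rw [variance_eq_sub (hYmem i), hv1, variance_eq_sub hMabs]
    have hsq : ∫ ω, ((fun ω => |X i ω|) ^ 2) ω ∂P = ∫ x, ((fun x : ℝ => |x|) ^ 2) x ∂(svg a b 0) := by
      have h := integral_map (μ := P) (φ := X i) (hXmeas i).aemeasurable
        ((measurable_abs.pow_const 2).aestronglyMeasurable (f := fun x : ℝ => |x| ^ 2))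
      rw [hdist i] at h
      simp only [Pi.pow_apply]
      exact h.symm
    rw [hsq, hYint i]
  have hWvar : ∀ i, variance (fun ω => (X i ω) ^ 2) P = v2 := by
    intro i
    rw [variance_eq_sub (hWmem i), hv2, variance_eq_sub hMsq]
    have hsq : ∫ ω, ((fun ω => (X i ω) ^ 2) ^ 2) ω ∂P
        = ∫ x, ((fun x : ℝ => x ^ 2) ^ 2) x ∂(svg a b 0) := by
      have h := integral_map (μ := P) (φ := X i) (hXmeas i).aemeasurable
        (((measurable_id'.pow_const 2).pow_const 2).aestronglyMeasurable
          (f := fun x : ℝ => (x ^ 2) ^ 2))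
      rw [hdist i] at h
      simp only [Pi.pow_apply]
      exact h.symm
    rw [hsq, hWint i]
  have hindY : ∀ i j, i ≠ j → IndepFun (fun ω => |X i ω|) (fun ω => |X j ω|) P :=
    fun i j hij => (hindep.indepFun hij).comp measurable_abs measurable_abs
  have hindW : ∀ i j, i ≠ j → IndepFun (fun ω => (X i ω) ^ 2) (fun ω => (X j ω) ^ 2) P :=
    fun i j hij => (hindep.indepFun hij).comp
      (measurable_id'.pow_const 2) (measurable_id'.pow_const 2)
  -- choice of ε
  set δ := m2 - π / 2 * m1 ^ 2 with hδ
  have hδpos : 0 < δ := by rw [hδ]; linarith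
  have hKpos : 0 < π * m1 + π / 2 + 2 := by
    have := Real.pi_pos
    positivity
  set ε := min (m1 / 2) (min 1 (δ / (π * m1 + π / 2 + 2))) with hεdef
  have hεpos : 0 < ε := lt_min (by linarith) (lt_min one_pos (by positivity))
  have hε1 : ε ≤ m1 / 2 := min_le_left _ _
  have hε2 : ε ≤ 1 := le_trans (min_le_right _ _) (min_le_left _ _)
  have hε3 : ε ≤ δ / (π * m1 + π / 2 + 2) := le_trans (min_le_right _ _) (min_le_right _ _)
  have hε3' : ε * (π * m1 + π / 2 + 2) ≤ δ := by
    rw [← le_div_iff₀ hKpos]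
    exact hε3
  -- analytic key claim
  have hkeyAV := svg_key_arith hm1pos hεpos hε1 hε2 (by rw [hδ] at hε3'; exact hε3')
  -- constant
  have hv1nn : 0 ≤ v1 := hv1 ▸ variance_nonneg _ _
  have hv2nn : 0 ≤ v2 := hv2 ▸ variance_nonneg _ _
  refine ⟨max ((v1 + v2) / ε ^ 2) 1, lt_of_lt_of_le one_pos (le_max_right _ _), ?_⟩
  intro N hN
  have hNpos : (0:ℝ) < N := by exact_mod_cast hN
  set E := {ω | (1 / 2) * Real.log (π / 2) <
      (1 / 2) * Real.log (empSqMean X N ω) - Real.log (empAbsMean X N ω)} with hE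
  have hAmeas : Measurable (empAbsMean X N) := by
    unfold empAbsMean
    exact (Finset.measurable_sum _ (fun i _ => (hXmeas i).abs)).div_const _
  have hVmeas : Measurable (empSqMean X N) := by
    unfold empSqMean
    exact (Finset.measurable_sum _ (fun i _ => (hXmeas i).pow_const 2)).div_const _
  have hEmeas : MeasurableSet E := by
    rw [hE]
    exact measurableSet_lt measurable_const
      ((hVmeas.log.const_mul _).sub hAmeas.log)
  set B1 := {ω | ε ≤ |empAbsMean X N ω - m1|} with hB1
  set B2 := {ω | ε ≤ |empSqMean X N ω - m2|} with hB2
  have hchebY : (P B1).toReal ≤ v1 / (N * ε ^ 2) := by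
    have h := cheb_bound (P := P) (fun i ω => |X i ω|) hYmem hindY hYint hYvar hN hεpos
    have hBeq : B1 = {ω | ε ≤ |(∑ i ∈ Finset.range N, |X i ω|) / N - m1|} := by
      rw [hB1]; unfold empAbsMean; rfl
    rw [hBeq]
    exact h
  have hchebW : (P B2).toReal ≤ v2 / (N * ε ^ 2) := by
    have h := cheb_bound (P := P) (fun i ω => (X i ω) ^ 2) hWmem hindW hWint hWvar hN hεpos
    have hBeq : B2 = {ω | ε ≤ |(∑ i ∈ Finset.range N, (X i ω) ^ 2) / N - m2|} := by
      rw [hB2]; unfold empSqMean; rfl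
    rw [hBeq]
    exact h
  have hsub : Eᶜ ⊆ B1 ∪ B2 := by
    have h1 : (B1 ∪ B2)ᶜ ⊆ E := by
      intro ω hω
      simp only [Set.mem_compl_iff, Set.mem_union, hB1, hB2, Set.mem_setOf_eq, not_or,
        not_le] at hω
      exact hkeyAV _ _ hω.1 hω.2
    have := Set.compl_subset_compl.mpr h1
    rwa [compl_compl] at this
  have hPE : (P Eᶜ).toReal ≤ (P B1).toReal + (P B2).toReal := by
    have h1 : P Eᶜ ≤ P B1 + P B2 := le_trans (measure_mono hsub) (measure_union_le _ _)
    have h2 := ENNReal.toReal_mono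
      (ENNReal.add_ne_top.mpr ⟨measure_ne_top P _, measure_ne_top P _⟩) h1
    rwa [ENNReal.toReal_add (measure_ne_top P _) (measure_ne_top P _)] at h2
  have hfinal : (P Eᶜ).toReal ≤ max ((v1 + v2) / ε ^ 2) 1 / N := by
    have hstep : (P Eᶜ).toReal ≤ (v1 + v2) / ε ^ 2 / N := by
      have : v1 / (N * ε ^ 2) + v2 / (N * ε ^ 2) = (v1 + v2) / ε ^ 2 / N := by
        rw [← add_div, div_div]
        ring_nf
      linarith [hchebY, hchebW, hPE]
    calc (P Eᶜ).toReal ≤ (v1 + v2) / ε ^ 2 / N := hstep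
      _ ≤ max ((v1 + v2) / ε ^ 2) 1 / N :=
          (div_le_div_iff_of_pos_right hNpos).mpr (le_max_left _ _)
  have hcompl : (P Eᶜ).toReal = 1 - (P E).toReal := by
    rw [prob_compl_eq_one_sub hEmeas,
      ENNReal.toReal_sub_of_le prob_le_one ENNReal.one_ne_top]
    simp
  rw [hcompl] at hfinal
  linarith
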